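/- Let G=(V,E) be a finite simple graph with unit edge weights, let χ: V → {1,…,c} be a c-coloring of G, let k be a positive integer, let v ∈ V, and let i ∈ {1,…,c}\{χ(v)} be a color such that v is (i,k)-blocked with respect to χ, i.e., |{w ∈ N(v) : χ(w) = i}| ≥ |{w ∈ N(v) : χ(w) = χ(v)}| + 2k − 1. Then there is no inclusion-minimal improving k-neighbor χ' of χ with χ'(v) = i. -/
import Mathlib


open Finset
open scoped Classical

/-- The finset of properly colored edges of `G` under the coloring `χ`:
edges whose two endpoints receive distinct colors. -/
noncomputable def properEdges {V : Type*} [Fintype V] {α : Type*}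
    (G : SimpleGraph V) (χ : V → α) : Finset (Sym2 V) :=
  G.edgeFinset.filter fun e => ¬ (Sym2.map χ e).IsDiag

/-- The flip between two colorings: the set of vertices where they differ. -/
noncomputable def flipSet {V : Type*} [Fintype V] {α : Type*}
    (χ χ' : V → α) : Finset V :=
  univ.filter fun v => χ v ≠ χ' v

/-- `χ'` is an improving `k`-neighbor of `χ` (unit edge weights): it has flip
distance at most `k` from `χ` and strictly more properly colored edges. -/
def IsImprovingKNeighbor {V : Type*} [Fintype V] {c : ℕ}
    (G : SimpleGraph V) (k : ℕ) (χ χ' : V → Fin c) : Prop :=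
  (flipSet χ χ').card ≤ k ∧ (properEdges G χ).card < (properEdges G χ').card

set_option maxHeartbeats 1000000 in
lemma properEdges_card_split {V : Type*} [Fintype V] [DecidableEq V] {α : Type*}
    (G : SimpleGraph V) [DecidableRel G.Adj] (ψ : V → α) (v : V) :
    (properEdges G ψ).card
      = ((properEdges G ψ).filter fun e => v ∉ e).card
        + ((G.neighborFinset v).filter fun w => ψ w ≠ ψ v).card := by
  classical
  rw [← Finset.card_filter_add_card_filter_not (s := properEdges G ψ)
    (p := fun e => v ∉ e)]
  congr 1
  refine Eq.symm (Finset.card_bij (fun w _ => s(v, w)) ?_ ?_ ?_)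
  · intro w hw
    simp only [mem_filter, SimpleGraph.mem_neighborFinset] at hw
    simp only [mem_filter, properEdges, SimpleGraph.mem_edgeFinset, SimpleGraph.mem_edgeSet,
      Sym2.mem_iff, Sym2.map_pair_eq, Sym2.isDiag_iff_proj_eq, not_not]
    exact ⟨⟨hw.1, fun h => hw.2 h.symm⟩, by simp⟩
  · intro w1 h1 w2 h2 h
    exact Sym2.congr_right.mp h
  · intro e he
    induction e using Sym2.ind with
    | _ a b =>
      simp only [mem_filter, properEdges, SimpleGraph.mem_edgeFinset, SimpleGraph.mem_edgeSet,
        Sym2.mem_iff, Sym2.map_pair_eq, Sym2.isDiag_iff_proj_eq, not_not] at he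
      obtain ⟨⟨hadj, hne⟩, hv⟩ := he
      rcases hv with hv | hv
      · subst hv
        refine ⟨b, ?_, rfl⟩
        simp only [mem_filter, SimpleGraph.mem_neighborFinset]
        exact ⟨hadj, fun h => hne h.symm⟩
      · subst hv
        refine ⟨a, ?_, Sym2.eq_swap⟩
        simp only [mem_filter, SimpleGraph.mem_neighborFinset]
        exact ⟨hadj.symm, fun h => hne h⟩

lemma properEdges_filter_notMem_eq {V : Type*} [Fintype V] [DecidableEq V] {α : Type*}
    (G : SimpleGraph V) [DecidableRel G.Adj] (ψ ψ' : V → α) (v : V)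
    (h : ∀ w, w ≠ v → ψ w = ψ' w) :
    ((properEdges G ψ).filter fun e => v ∉ e)
      = ((properEdges G ψ').filter fun e => v ∉ e) := by
  classical
  ext e
  induction e using Sym2.ind with
  | _ a b =>
    simp only [mem_filter, properEdges, SimpleGraph.mem_edgeFinset,
      Sym2.mem_iff, Sym2.map_pair_eq, Sym2.isDiag_iff_proj_eq, not_or]
    constructor
    · rintro ⟨⟨he, hne⟩, ha, hb⟩
      exact ⟨⟨he, by rw [← h a (Ne.symm ha), ← h b (Ne.symm hb)]; exact hne⟩, ha, hb⟩
    · rintro ⟨⟨he, hne⟩, ha, hb⟩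
      exact ⟨⟨he, by rw [h a (Ne.symm ha), h b (Ne.symm hb)]; exact hne⟩, ha, hb⟩

/-- If a vertex `v` is `(i,k)`-blocked with respect to `χ` (it has at least
`2k - 1` more neighbors of color `i` than of color `χ v`), then no
inclusion-minimal improving `k`-neighbor `χ'` of `χ` satisfies `χ' v = i`. -/
theorem no_minimal_improving_neighbor_of_blocked
    {V : Type*} [Fintype V] [DecidableEq V] {c : ℕ}
    (G : SimpleGraph V) [DecidableRel G.Adj]
    (χ : V → Fin c) (k : ℕ) (hk : 1 ≤ k) (v : V) (i : Fin c) (hi : i ≠ χ v)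
    (hblocked : ((G.neighborFinset v).filter fun w => χ w = χ v).card + 2 * k ≤
      ((G.neighborFinset v).filter fun w => χ w = i).card + 1) :
    ¬ ∃ χ' : V → Fin c,
        (IsImprovingKNeighbor G k χ χ' ∧
          ∀ χ'' : V → Fin c, IsImprovingKNeighbor G k χ χ'' →
            ¬ flipSet χ χ'' ⊂ flipSet χ χ') ∧
        χ' v = i := by
  classical
  rintro ⟨χ', ⟨⟨hflip, himp⟩, hmin⟩, hvi⟩
  set χ'' : V → Fin c := Function.update χ' v (χ v) with hχ''def
  have hoff : ∀ w, w ≠ v → χ'' w = χ' w := fun w hw => Function.update_of_ne hw _ _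
  have hat : χ'' v = χ v := Function.update_self _ _ _
  have hvflip : v ∈ flipSet χ χ' := by
    simp only [flipSet, mem_filter, mem_univ, true_and]
    rw [hvi]
    exact fun h => hi (h.symm)
  -- flip set of χ'' is the erase
  have hflipset : flipSet χ χ'' = (flipSet χ χ').erase v := by
    ext w
    simp only [flipSet, mem_filter, mem_univ, true_and, mem_erase]
    by_cases hw : w = v
    · subst hw
      simp [hat]
    · rw [hoff w hw]
      simp [hw]
  have hssub : flipSet χ χ'' ⊂ flipSet χ χ' := by
    rw [hflipset]
    exact Finset.erase_ssubset hvflip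
  -- counting on neighbors
  set N := G.neighborFinset v with hN
  have hvN : v ∉ N := by simp [hN]
  set F : Finset V := N.filter fun w => χ w ≠ χ' w with hF
  have hfk : F.card + 1 ≤ k := by
    have hsub : insert v F ⊆ flipSet χ χ' := by
      intro w hw
      rcases Finset.mem_insert.mp hw with hw | hw
      · exact hw ▸ hvflip
      · simp only [hF, mem_filter] at hw
        simp only [flipSet, mem_filter, mem_univ, true_and]
        exact hw.2
    have hvF : v ∉ F := fun h => hvN (Finset.mem_filter.mp h).1
    calc F.card + 1 = (insert v F).card := (Finset.card_insert_of_notMem hvF).symm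
      _ ≤ (flipSet χ χ').card := Finset.card_le_card hsub
      _ ≤ k := hflip
  have h3 : (N.filter fun w => χ w = i).card ≤ (N.filter fun w => χ' w = i).card + F.card := by
    calc (N.filter fun w => χ w = i).card
        ≤ ((N.filter fun w => χ' w = i) ∪ F).card := by
          apply Finset.card_le_card
          intro w hw
          simp only [mem_filter] at hw
          by_cases h : χ' w = i
          · exact Finset.mem_union_left _ (Finset.mem_filter.mpr ⟨hw.1, h⟩)
          · exact Finset.mem_union_right _ (Finset.mem_filter.mpr ⟨hw.1, fun hc => h (hc ▸ hw.2)⟩)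
      _ ≤ _ := Finset.card_union_le _ _
  have h4 : (N.filter fun w => χ' w = χ v).card ≤ (N.filter fun w => χ w = χ v).card + F.card := by
    calc (N.filter fun w => χ' w = χ v).card
        ≤ ((N.filter fun w => χ w = χ v) ∪ F).card := by
          apply Finset.card_le_card
          intro w hw
          simp only [mem_filter] at hw
          by_cases h : χ w = χ v
          · exact Finset.mem_union_left _ (Finset.mem_filter.mpr ⟨hw.1, h⟩)
          · exact Finset.mem_union_right _ (Finset.mem_filter.mpr ⟨hw.1, fun hc => h (hc.trans hw.2)⟩)
      _ ≤ _ := Finset.card_union_le _ _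
  -- key strict inequality on neighbor counts
  have hkey : (N.filter fun w => χ' w = χ v).card < (N.filter fun w => χ' w = i).card := by
    omega
  -- translate to "properly colored at v" counts
  have hsplit' := properEdges_card_split G χ' v
  have hsplit'' := properEdges_card_split G χ'' v
  rw [← hN] at hsplit' hsplit''
  have hB : ((properEdges G χ'').filter fun e => v ∉ e)
      = ((properEdges G χ').filter fun e => v ∉ e) :=
    properEdges_filter_notMem_eq G χ'' χ' v hoff
  have hfilt'' : (N.filter fun w => χ'' w ≠ χ'' v) = N.filter fun w => ¬ χ' w = χ v := by
    apply Finset.filter_congr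
    intro w hw
    rw [hat, hoff w (fun h => hvN (h ▸ hw))]
  have hfilt' : (N.filter fun w => χ' w ≠ χ' v) = N.filter fun w => ¬ χ' w = i := by
    apply Finset.filter_congr
    intro w _
    rw [hvi]
  have hcompl : ∀ (j : Fin c), (N.filter fun w => ¬ χ' w = j).card
      = N.card - (N.filter fun w => χ' w = j).card := by
    intro j
    have := Finset.card_filter_add_card_filter_not (s := N) (p := fun w => χ' w = j)
    omega
  have hle : ∀ (j : Fin c), (N.filter fun w => χ' w = j).card ≤ N.card :=
    fun j => Finset.card_le_card (Finset.filter_subset _ _)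
  have hgain : (N.filter fun w => χ' w ≠ χ' v).card < (N.filter fun w => χ'' w ≠ χ'' v).card := by
    rw [hfilt', hfilt'', hcompl, hcompl]
    have := hle i
    have := hle (χ v)
    omega
  have himp'' : (properEdges G χ').card < (properEdges G χ'').card := by
    rw [hsplit', hsplit'', hB]
    apply Nat.add_lt_add_left
    convert hgain using 2 <;> congr!
  exact hmin χ'' ⟨le_trans (Finset.card_le_card hssub.subset) hflip,
    lt_trans himp himp''⟩ hssub
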